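/- Let $a, b \in \mathbb{R}^n$ be vectors with positive entries, where $a$ is sorted so that $a_i \geq a_{i+1}$ for all $i$, and let $\pi$ be a permutation of $[n]$ such that $b_{\pi(i)} \geq b_{\pi(i+1)}$ for all $i$. If $|a_i - b_i| \leq \epsilon a_i$ for all $i \in [n]$, then $|a_i - b_{\pi(i)}| \leq \epsilon a_i$ for all $i \in [n]$. -/

import Mathlib

lemma perm_exists_le (n : ℕ) (π : Equiv.Perm (Fin n)) (i : Fin n) :
    ∃ j, j ≤ i ∧ i ≤ π j := by
  by_contra h
  push_neg at h
  have hmaps : ∀ j ∈ Finset.Iic i, π j ∈ Finset.Iio i := by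
    intro j hj
    simp only [Finset.mem_Iic] at hj
    simp only [Finset.mem_Iio]
    exact h j hj
  have hcard := Finset.card_le_card_of_injOn π hmaps
    (Set.injOn_of_injective π.injective)
  simp [Fin.card_Iic, Fin.card_Iio] at hcard

/-- If `a` is sorted nonincreasing, `b ∘ π` is nonincreasing, all entries positive, and
`b` entrywise multiplicatively approximates `a`, then the sorted version of `b` also
entrywise approximates `a`. -/
theorem sorted_approx_preserved (n : ℕ) (ε : ℝ) (hε : 0 ≤ ε)
    (a b : Fin n → ℝ) (ha_pos : ∀ i, 0 < a i) (hb_pos : ∀ i, 0 < b i)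
    (ha_sorted : ∀ i j : Fin n, i ≤ j → a j ≤ a i)
    (π : Equiv.Perm (Fin n))
    (hb_sorted : ∀ i j : Fin n, i ≤ j → b (π j) ≤ b (π i))
    (happrox : ∀ i, |a i - b i| ≤ ε * a i) :
    ∀ i, |a i - b (π i)| ≤ ε * a i := by
  intro i
  have hub : ∀ k, b k ≤ a k + ε * a k := fun k => by
    have := abs_le.mp (happrox k); linarith [this.1]
  have hlb : ∀ k, a k - ε * a k ≤ b k := fun k => by
    have := abs_le.mp (happrox k); linarith [this.2]
  -- upper bound: ∃ j ≤ i with i ≤ π j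
  obtain ⟨j, hj, hπj⟩ := perm_exists_le n π i
  have h1 : b (π i) ≤ a i + ε * a i := by
    calc b (π i) ≤ b (π j) := hb_sorted j i hj
      _ ≤ a (π j) + ε * a (π j) := hub _
      _ ≤ a i + ε * a i := by
          have := ha_sorted i (π j) hπj
          nlinarith
  -- lower bound: apply to π⁻¹
  obtain ⟨j', hj', hπj'⟩ := perm_exists_le n π⁻¹ i
  have h2 : a i - ε * a i ≤ b (π i) := by
    rcases le_or_gt ε 1 with hε1 | hε1
    · have hkey : π (π⁻¹ j') = j' := π.apply_symm_apply j'
      calc a i - ε * a i ≤ a j' - ε * a j' := by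
              have := ha_sorted j' i hj'
              nlinarith
        _ ≤ b j' := hlb _
        _ = b (π (π⁻¹ j')) := by rw [hkey]
        _ ≤ b (π i) := hb_sorted i (π⁻¹ j') hπj'
    · nlinarith [hb_pos (π i), ha_pos i]
  rw [abs_le]
  constructor <;> linarith
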